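/- Let k be an integer with k ∉ {0,1}, and let S be an open neighborhood of I_n in T_n(ℂ) consisting of invertible matrices. Two maps φ, ψ : T_n(ℂ) → T_n(ℂ) with ψ complex linear satisfy tr(φ(A)ψ(B)^k) = tr(AB^k) for all A ∈ T_n(ℂ) and all B ∈ S if and only if all of the following hold: (i) φ and ψ map N_n(ℂ) into N_n(ℂ); (ii) there exist an invertible diagonal matrix C ∈ D_n(ℂ) and a permutation matrix P ∈ M_n(ℂ) such that D(φ(A)) = PC^{-k}AP⁻¹ and D(ψ(A)) = PCAP⁻¹ for all A ∈ D_n(ℂ); (iii) D(φ(A)) = D(φ(D(A))) for all A ∈ T_n(ℂ). -/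

import Mathlib

open Matrix

/-- `A` is upper triangular: all entries strictly below the diagonal vanish. -/
def UpperTri {n : ℕ} (A : Matrix (Fin n) (Fin n) ℂ) : Prop :=
  ∀ i j : Fin n, j < i → A i j = 0

/-- `A` is strictly upper triangular: all entries on or below the diagonal vanish. -/
def StrictUpperTri {n : ℕ} (A : Matrix (Fin n) (Fin n) ℂ) : Prop :=
  ∀ i j : Fin n, j ≤ i → A i j = 0

/-- `D(A)`: the diagonal matrix with the same diagonal entries as `A`. -/
def diagPart {n : ℕ} (A : Matrix (Fin n) (Fin n) ℂ) : Matrix (Fin n) (Fin n) ℂ :=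
  Matrix.diagonal fun i => A i i

namespace Stmt19



variable {n : ℕ} {A B X Y : Matrix (Fin n) (Fin n) ℂ}

lemma upperTri_mul (hA : UpperTri A) (hB : UpperTri B) : UpperTri (A * B) := by
  intro i j hij
  rw [Matrix.mul_apply]
  refine Finset.sum_eq_zero fun l _ => ?_
  rcases lt_or_ge l i with h | h
  · rw [hA i l h, zero_mul]
  · rw [hB l j (lt_of_lt_of_le hij h), mul_zero]

lemma mul_diag_apply (hA : UpperTri A) (hB : UpperTri B) (i : Fin n) :
    (A * B) i i = A i i * B i i := by
  rw [Matrix.mul_apply]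
  refine Finset.sum_eq_single i (fun l _ hl => ?_) (by simp)
  rcases lt_or_ge l i with h | h
  · rw [hA i l h, zero_mul]
  · rw [hB l i (lt_of_le_of_ne h (Ne.symm hl)), mul_zero]

lemma trace_mul_tri (hA : UpperTri A) (hB : UpperTri B) :
    (A * B).trace = ∑ i, A i i * B i i := by
  rw [Matrix.trace]
  exact Finset.sum_congr rfl fun i _ => mul_diag_apply hA hB i

lemma upperTri_one : UpperTri (1 : Matrix (Fin n) (Fin n) ℂ) := by
  intro i j hij
  simp [Matrix.one_apply, (ne_of_lt hij).symm]

lemma upperTri_pow (hA : UpperTri A) (m : ℕ) : UpperTri (A ^ m) := by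
  induction m with
  | zero => simpa using upperTri_one
  | succ m ih => rw [pow_succ]; exact upperTri_mul ih hA

lemma pow_diag (hA : UpperTri A) (m : ℕ) (i : Fin n) : (A ^ m) i i = (A i i) ^ m := by
  induction m with
  | zero => simp [Matrix.one_apply]
  | succ m ih => rw [pow_succ, mul_diag_apply (upperTri_pow hA m) hA, ih, pow_succ]

lemma det_tri (hA : UpperTri A) : A.det = ∏ i, A i i :=
  Matrix.det_of_upperTriangular (fun i j h => hA i j h)

lemma diag_ne_zero_of_isUnit (hA : UpperTri A) (h : IsUnit A) (i : Fin n) : A i i ≠ 0 := by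
  have hdet : IsUnit A.det := (Matrix.isUnit_iff_isUnit_det A).mp h
  rw [det_tri hA] at hdet
  have := hdet.ne_zero
  intro h0
  exact this (Finset.prod_eq_zero (Finset.mem_univ i) h0)

lemma isUnit_of_diag (hA : UpperTri A) (h : ∀ i, A i i ≠ 0) : IsUnit A := by
  rw [Matrix.isUnit_iff_isUnit_det, det_tri hA, isUnit_iff_ne_zero, Finset.prod_ne_zero_iff]
  exact fun i _ => h i

lemma upperTri_inv (hA : UpperTri A) (h : IsUnit A) : UpperTri A⁻¹ := by
  have : Invertible A := h.invertible
  have := Matrix.blockTriangular_inv_of_blockTriangular (M := A) (b := id)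
    (fun i j hij => hA i j hij)
  exact fun i j hij => this hij

lemma inv_diag (hA : UpperTri A) (h : IsUnit A) (i : Fin n) : A⁻¹ i i = (A i i)⁻¹ := by
  have h1 : A⁻¹ * A = 1 := Matrix.nonsing_inv_mul A ((Matrix.isUnit_iff_isUnit_det A).mp h)
  have h2 := mul_diag_apply (upperTri_inv hA h) hA i
  rw [h1, Matrix.one_apply_eq] at h2
  exact eq_inv_of_mul_eq_one_left h2.symm

lemma upperTri_zpow (hA : UpperTri A) (k : ℤ) (h : 0 ≤ k ∨ IsUnit A) : UpperTri (A ^ k) := by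
  cases k with
  | ofNat m => rw [Int.ofNat_eq_coe, zpow_natCast]; exact upperTri_pow hA m
  | negSucc m =>
    rcases h with h | h
    · exact absurd h (by simp [Int.negSucc_not_nonneg])
    · rw [zpow_negSucc]
      exact upperTri_inv (upperTri_pow hA (m+1)) (h.pow (m+1))

lemma zpow_diag (hA : UpperTri A) (k : ℤ) (h : 0 ≤ k ∨ IsUnit A) (i : Fin n) :
    (A ^ k) i i = (A i i) ^ k := by
  cases k with
  | ofNat m => rw [Int.ofNat_eq_coe, zpow_natCast, zpow_natCast]; exact pow_diag hA m i
  | negSucc m =>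
    rcases h with h | h
    · exact absurd h (by simp [Int.negSucc_not_nonneg])
    · rw [zpow_negSucc, zpow_negSucc,
        inv_diag (upperTri_pow hA (m+1)) (h.pow (m+1)) i, pow_diag hA (m+1) i]

lemma trace_mul_zpow (hX : UpperTri X) (hY : UpperTri Y) (k : ℤ) (h : 0 ≤ k ∨ IsUnit Y) :
    (X * Y ^ k).trace = ∑ i, X i i * (Y i i) ^ k := by
  rw [trace_mul_tri hX (upperTri_zpow hY k h)]
  exact Finset.sum_congr rfl fun i _ => by rw [zpow_diag hY k h i]

lemma zpow_eq_zero_of_not_isUnit (h : ¬ IsUnit Y) {k : ℤ} (hk : k < 0) : Y ^ k = 0 := by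
  obtain ⟨m, rfl⟩ : ∃ m : ℕ, k = Int.negSucc m := by
    cases k with
    | ofNat m => exact absurd hk (by simp [Int.ofNat_eq_coe])
    | negSucc m => exact ⟨m, rfl⟩
  rw [zpow_negSucc]
  apply Matrix.nonsing_inv_apply_not_isUnit
  intro hu
  exact h ((Matrix.isUnit_iff_isUnit_det Y).mpr
    (by rw [Matrix.det_pow] at hu; exact (isUnit_pow_iff (Nat.succ_ne_zero m)).mp hu))



variable {n : ℕ}

/-- `F` restricted to every affine line is a polynomial function. -/
def PolyLine (F : (Fin n → ℂ) → ℂ) : Prop :=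
  ∀ z w : Fin n → ℂ, ∃ q : Polynomial ℂ, ∀ t : ℂ, F (z + t • w) = q.eval t

lemma PolyLine.const (c : ℂ) : PolyLine (fun _ : Fin n → ℂ => c) :=
  fun _ _ => ⟨Polynomial.C c, by simp⟩

lemma PolyLine.linear (m : Fin n → ℂ) : PolyLine (fun z => ∑ j, m j * z j) := by
  intro z w
  refine ⟨Polynomial.C (∑ j, m j * z j) + Polynomial.C (∑ j, m j * w j) * Polynomial.X,
    fun t => ?_⟩
  simp only [Pi.add_apply, Pi.smul_apply, smul_eq_mul, Polynomial.eval_add, Polynomial.eval_mul,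
    Polynomial.eval_C, Polynomial.eval_X]
  rw [Finset.sum_mul, ← Finset.sum_add_distrib]
  exact Finset.sum_congr rfl fun j _ => by ring

lemma PolyLine.coord (j : Fin n) : PolyLine (fun z => z j) := by
  intro z w
  exact ⟨Polynomial.C (z j) + Polynomial.C (w j) * Polynomial.X, fun t => by simp; ring⟩

lemma PolyLine.add {F G : (Fin n → ℂ) → ℂ} (hF : PolyLine F) (hG : PolyLine G) :
    PolyLine (fun z => F z + G z) := by
  intro z w
  obtain ⟨q, hq⟩ := hF z w
  obtain ⟨r, hr⟩ := hG z w
  exact ⟨q + r, fun t => by simp [hq t, hr t]⟩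

lemma PolyLine.mul {F G : (Fin n → ℂ) → ℂ} (hF : PolyLine F) (hG : PolyLine G) :
    PolyLine (fun z => F z * G z) := by
  intro z w
  obtain ⟨q, hq⟩ := hF z w
  obtain ⟨r, hr⟩ := hG z w
  exact ⟨q * r, fun t => by simp [hq t, hr t]⟩

lemma PolyLine.neg {F : (Fin n → ℂ) → ℂ} (hF : PolyLine F) : PolyLine (fun z => - F z) := by
  intro z w
  obtain ⟨q, hq⟩ := hF z w
  exact ⟨-q, fun t => by simp [hq t]⟩

lemma PolyLine.sub {F G : (Fin n → ℂ) → ℂ} (hF : PolyLine F) (hG : PolyLine G) :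
    PolyLine (fun z => F z - G z) := by
  simpa [sub_eq_add_neg] using hF.add hG.neg

lemma PolyLine.pow {F : (Fin n → ℂ) → ℂ} (hF : PolyLine F) (m : ℕ) :
    PolyLine (fun z => (F z) ^ m) := by
  induction m with
  | zero => simpa using PolyLine.const 1
  | succ m ih => simpa [pow_succ] using ih.mul hF

lemma PolyLine.smul {F : (Fin n → ℂ) → ℂ} (c : ℂ) (hF : PolyLine F) :
    PolyLine (fun z => c * F z) := (PolyLine.const c).mul hF

lemma PolyLine.sum {ι : Type*} (s : Finset ι) (F : ι → (Fin n → ℂ) → ℂ)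
    (h : ∀ i ∈ s, PolyLine (F i)) : PolyLine (fun z => ∑ i ∈ s, F i z) := by
  induction s using Finset.cons_induction with
  | empty => simpa using PolyLine.const 0
  | cons a s ha ih =>
    simp only [Finset.sum_cons]
    exact (h a (Finset.mem_cons_self a s)).add
      (ih fun i hi => h i (Finset.mem_cons_of_mem hi))

lemma PolyLine.prod {ι : Type*} (s : Finset ι) (F : ι → (Fin n → ℂ) → ℂ)
    (h : ∀ i ∈ s, PolyLine (F i)) : PolyLine (fun z => ∏ i ∈ s, F i z) := by
  induction s using Finset.cons_induction with
  | empty => simpa using PolyLine.const 1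
  | cons a s ha ih =>
    simp only [Finset.prod_cons]
    exact (h a (Finset.mem_cons_self a s)).mul
      (ih fun i hi => h i (Finset.mem_cons_of_mem hi))

/-- Analytic continuation along lines: a line-polynomial function vanishing on a
nonempty open set vanishes everywhere. -/
lemma PolyLine.eq_zero {F : (Fin n → ℂ) → ℂ} (hF : PolyLine F) {U : Set (Fin n → ℂ)}
    (hU : IsOpen U) {z0 : Fin n → ℂ} (hz0 : z0 ∈ U) (hvan : ∀ z ∈ U, F z = 0)
    (y : Fin n → ℂ) : F y = 0 := by
  obtain ⟨q, hq⟩ := hF z0 (y - z0)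
  have hcont : Continuous (fun t : ℂ => z0 + t • (y - z0)) := by continuity
  have hT : {t : ℂ | z0 + t • (y - z0) ∈ U} ∈ nhds (0 : ℂ) := by
    refine (hU.preimage hcont).mem_nhds ?_
    simp [hz0]
  have hsub : {t : ℂ | z0 + t • (y - z0) ∈ U} ⊆ {t : ℂ | q.IsRoot t} := by
    intro t ht
    simpa [Polynomial.IsRoot, ← hq t] using hvan _ ht
  have hq0 : q = 0 := Polynomial.eq_zero_of_infinite_isRoot q
    ((infinite_of_mem_nhds (0 : ℂ) hT).mono hsub)
  have := hq 1
  rw [hq0] at this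
  simpa using this

lemma two_pow_ne_one {e : ℕ} (he : e ≠ 0) : (2 : ℂ) ^ e ≠ 1 := by
  intro h
  have : ((2 ^ e : ℕ) : ℂ) = ((1 : ℕ) : ℂ) := by push_cast; simpa using h
  have h3 : (2 : ℕ) ^ e = 1 := Nat.cast_injective this
  have : 2 ^ 1 ≤ 2 ^ e := Nat.pow_le_pow_right (by norm_num) (Nat.one_le_iff_ne_zero.mpr he)
  omega

lemma two_pow_ne_two {e : ℕ} (he : 2 ≤ e) : (2 : ℂ) ^ e ≠ 2 := by
  intro h
  have : ((2 ^ e : ℕ) : ℂ) = ((2 : ℕ) : ℂ) := by push_cast; simpa using h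
  have h2 : (2 : ℕ) ^ e = 2 := Nat.cast_injective this
  have : 2 ^ 2 ≤ 2 ^ e := Nat.pow_le_pow_right (by norm_num) he
  omega

/-- If `(c + t u) ^ e = c ^ e` for all `t` near `0`, then `u = 0`. -/
lemma onevar {c u : ℂ} (hc : c ≠ 0) {e : ℕ} (he : e ≠ 0) {T : Set ℂ} (hT : T ∈ nhds (0 : ℂ))
    (h : ∀ t ∈ T, (c + t * u) ^ e = c ^ e) : u = 0 := by
  by_contra hu
  set q : Polynomial ℂ :=
    (Polynomial.C c + Polynomial.C u * Polynomial.X) ^ e - Polynomial.C (c ^ e) with hqdef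
  have hsub : T ⊆ {t : ℂ | q.IsRoot t} := by
    intro t ht
    simp only [Set.mem_setOf_eq, Polynomial.IsRoot, hqdef]
    simp only [Polynomial.eval_sub, Polynomial.eval_pow, Polynomial.eval_add,
      Polynomial.eval_mul, Polynomial.eval_C, Polynomial.eval_X]
    rw [show c + u * t = c + t * u by ring, h t ht, sub_self]
  have hq0 : q = 0 := Polynomial.eq_zero_of_infinite_isRoot q
    ((infinite_of_mem_nhds (0 : ℂ) hT).mono hsub)
  have heval := congrArg (Polynomial.eval (c / u)) hq0
  simp only [hqdef, Polynomial.eval_sub, Polynomial.eval_pow, Polynomial.eval_add,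
    Polynomial.eval_mul, Polynomial.eval_C, Polynomial.eval_X, Polynomial.eval_zero] at heval
  rw [mul_div_cancel₀ c hu] at heval
  have h2c : (2 : ℂ) ^ e * c ^ e = 1 * c ^ e := by
    rw [← mul_pow, show (2 : ℂ) * c = c + c by ring, one_mul, ← sub_eq_zero]
    exact heval
  exact two_pow_ne_one he (mul_right_cancel₀ (pow_ne_zero e hc) h2c)

/-- A point with all coordinates nonzero in the kernel of a linear form with
two nonzero coefficients. -/
lemma zstar {m : Fin n → ℂ} {p q : Fin n} (hpq : p ≠ q) (hp : m p ≠ 0) (hq : m q ≠ 0) :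
    ∃ z : Fin n → ℂ, (∀ l, z l ≠ 0) ∧ ∑ j, m j * z j = 0 := by
  classical
  set s : Finset (Fin n) := (Finset.univ.erase p).erase q with hs
  set S0 : ℂ := ∑ j ∈ s, m j with hS0
  set t : ℂ := if S0 + m q ≠ 0 then 1 else 2 with ht
  have htne : t ≠ 0 := by rw [ht]; split <;> norm_num
  have hnum : S0 + m q * t ≠ 0 := by
    rw [ht]; split_ifs with h
    · simpa using h
    · push_neg at h
      rw [show S0 + m q * 2 = S0 + m q + m q by ring, h, zero_add]; exact hq
  set zp : ℂ := -(S0 + m q * t) / m p with hzp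
  set z : Fin n → ℂ := fun l => if l = p then zp else if l = q then t else 1 with hz
  have hzp' : z p = zp := by simp [hz]
  have hzq' : z q = t := by simp [hz, Ne.symm hpq]
  refine ⟨z, fun l => ?_, ?_⟩
  · rw [hz]; dsimp only; split_ifs
    · exact div_ne_zero (neg_ne_zero.mpr hnum) hp
    · exact htne
    · norm_num
  · have hqmem : q ∈ Finset.univ.erase p := Finset.mem_erase.mpr ⟨Ne.symm hpq, Finset.mem_univ q⟩
    have e1 : ∑ j, m j * z j = m p * z p + ∑ j ∈ Finset.univ.erase p, m j * z j :=
      (Finset.add_sum_erase _ _ (Finset.mem_univ p)).symm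
    have e2 : ∑ j ∈ Finset.univ.erase p, m j * z j = m q * z q + ∑ j ∈ s, m j * z j :=
      (Finset.add_sum_erase _ _ hqmem).symm
    have e3 : ∑ j ∈ s, m j * z j = S0 := by
      rw [hS0]
      refine Finset.sum_congr rfl fun l hl => ?_
      have hl1 : l ≠ q := (Finset.mem_erase.mp hl).1
      have hl2 : l ≠ p := (Finset.mem_erase.mp (Finset.mem_erase.mp hl).2).1
      simp [hz, hl1, hl2]
    rw [e1, e2, e3, hzp', hzq', hzp]
    field_simp
    ring

/-- Linear algebra: a family of `N` vectors whose span contains `N` linearly independent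
vectors is itself linearly independent, with the same span. -/
lemma la {V : Type*} [AddCommGroup V] [Module ℂ V] {N : ℕ} {v w : Fin N → V}
    (hw : LinearIndependent ℂ w) (hsub : ∀ j, w j ∈ Submodule.span ℂ (Set.range v)) :
    LinearIndependent ℂ v ∧ ∀ i, v i ∈ Submodule.span ℂ (Set.range w) := by
  classical
  have hle : Submodule.span ℂ (Set.range w) ≤ Submodule.span ℂ (Set.range v) :=
    Submodule.span_le.mpr (Set.range_subset_iff.mpr hsub)
  haveI : FiniteDimensional ℂ (Submodule.span ℂ (Set.range v)) :=
    FiniteDimensional.span_of_finite ℂ (Set.finite_range v)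
  have hcw : Module.finrank ℂ (Submodule.span ℂ (Set.range w)) = N := by
    rw [finrank_span_eq_card hw, Fintype.card_fin]
  have hcv : Module.finrank ℂ (Submodule.span ℂ (Set.range v)) ≤ N := by
    simpa [Set.finrank] using finrank_range_le_card v
  have heq : Submodule.span ℂ (Set.range w) = Submodule.span ℂ (Set.range v) :=
    Submodule.eq_of_le_of_finrank_le hle (by rw [hcw]; exact hcv)
  refine ⟨?_, fun i => ?_⟩
  · rw [linearIndependent_iff_card_eq_finrank_span, Fintype.card_fin, Set.finrank, ← heq, hcw]
  · rw [heq]; exact Submodule.subset_span (Set.mem_range_self i)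



lemma sum_inv_pow_eq_div {σ : Type*} [Fintype σ] [DecidableEq σ] (M : ℕ) (u v : σ → ℂ)
    (hu : ∀ i, u i ≠ 0) :
    ∑ i, v i * (u i) ^ (-(M:ℤ))
      = (∑ i, v i * ∏ i' ∈ Finset.univ.erase i, (u i') ^ M) / ∏ i, (u i) ^ M := by
  have hU : (∏ i, (u i) ^ M) ≠ 0 :=
    Finset.prod_ne_zero_iff.mpr fun i _ => pow_ne_zero M (hu i)
  rw [Finset.sum_div]
  refine Finset.sum_congr rfl fun i _ => ?_
  rw [eq_div_iff hU, ← Finset.mul_prod_erase Finset.univ (fun i' => (u i') ^ M)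
    (Finset.mem_univ i), _root_.zpow_neg, zpow_natCast, mul_assoc,
    inv_mul_cancel_left₀ (pow_ne_zero M (hu i))]

lemma clear_iff {ι κ : Type*} [Fintype ι] [DecidableEq ι] [Fintype κ] [DecidableEq κ] (M : ℕ)
    (x b : ι → ℂ) (y d : κ → ℂ) (hx : ∀ i, x i ≠ 0) (hy : ∀ j, y j ≠ 0) :
    (∑ i, b i * (x i) ^ (-(M:ℤ)) = ∑ j, d j * (y j) ^ (-(M:ℤ)))
    ↔ ((∑ i, b i * ∏ i' ∈ Finset.univ.erase i, (x i') ^ M) * ∏ j, (y j) ^ M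
      = (∑ j, d j * ∏ l ∈ Finset.univ.erase j, (y l) ^ M) * ∏ i, (x i) ^ M) := by
  have hX : (∏ i, (x i) ^ M) ≠ 0 :=
    Finset.prod_ne_zero_iff.mpr fun i _ => pow_ne_zero M (hx i)
  have hY : (∏ j, (y j) ^ M) ≠ 0 :=
    Finset.prod_ne_zero_iff.mpr fun j _ => pow_ne_zero M (hy j)
  rw [sum_inv_pow_eq_div M x b hx, sum_inv_pow_eq_div M y d hy, div_eq_div_iff hX hY]

lemma sum_single_mul {n : ℕ} (j : Fin n) (f : Fin n → ℂ) :
    ∑ l, (Pi.single j 1 : Fin n → ℂ) l * f l = f j := by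
  rw [Finset.sum_eq_single j] <;> simp +contextual [Pi.single_apply]

lemma sum_mul_single {n : ℕ} (p : Fin n) (g : Fin n → ℂ) :
    ∑ l, g l * (Pi.single p 1 : Fin n → ℂ) l = g p := by
  rw [Finset.sum_eq_single p] <;> simp +contextual [Pi.single_apply]

lemma keyLemma {n : ℕ} {k : ℤ} (hk0 : k ≠ 0) (hk1 : k ≠ 1)
    {W : Set (Fin n → ℂ)} (hWopen : IsOpen W) (hW1 : (1 : Fin n → ℂ) ∈ W)
    (m : Matrix (Fin n) (Fin n) ℂ)
    (R : Set ((Fin n → ℂ) × (Fin n → ℂ)))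
    (hRall : ∀ α : Fin n → ℂ, ∃ b, (b, α) ∈ R)
    (hmain : ∀ p ∈ R, ∀ z ∈ W,
      ∑ i, p.1 i * (∑ j, m i j * z j) ^ k = ∑ j, p.2 j * (z j) ^ k)
    (hnz : k < 0 → ∀ z ∈ W, (∀ j, z j ≠ 0) ∧ (∀ i, (∑ j, m i j * z j) ≠ 0)) :
    ∃ (τ : Equiv.Perm (Fin n)) (c : Fin n → ℂ), (∀ i, c i ≠ 0) ∧
      (∀ i j, m i j = if j = τ i then c i else 0) ∧
      (∀ p ∈ R, ∀ i, p.1 i = (c i) ^ (-k) * p.2 (τ i)) := by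
  classical
  -- it suffices to find a function `τ0`, injective, with row structure and coefficients
  suffices hsuff : ∃ (τ0 : Fin n → Fin n) (c : Fin n → ℂ), Function.Injective τ0 ∧
      (∀ i, c i ≠ 0) ∧ (∀ i j, m i j = if j = τ0 i then c i else 0) ∧
      (∀ p ∈ R, ∀ i, p.1 i * (c i) ^ k = p.2 (τ0 i)) by
    obtain ⟨τ0, c, hinj, hc, hm, hbc⟩ := hsuff
    refine ⟨Equiv.ofBijective τ0 ((Finite.injective_iff_bijective).mp hinj), c, hc, ?_, ?_⟩
    · intro i j
      simpa using hm i j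
    · intro p hp i
      have hck : (c i) ^ k ≠ 0 := zpow_ne_zero k (hc i)
      have := hbc p hp i
      rw [_root_.zpow_neg]
      simp only [Equiv.ofBijective_apply]
      rw [← this, mul_comm (p.1 i) ((c i)^k), inv_mul_cancel_left₀ hck]
  rcases lt_or_ge k 0 with hneg | hpos
  · -- case k < 0
    set M : ℕ := k.natAbs with hMdef
    have hkM : k = -(M : ℤ) := by omega
    have hM1 : M ≠ 0 := by omega
    have hWnz := hnz hneg
    set Ω : Set (Fin n → ℂ) :=
      {z | (∀ j, z j ≠ 0) ∧ (∀ i, (∑ j, m i j * z j) ≠ 0)} with hΩdef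
    have hΩopen : IsOpen Ω := by
      have h1 : Ω = (⋂ j, {z : Fin n → ℂ | z j ≠ 0}) ∩
          ⋂ i, {z : Fin n → ℂ | (∑ j, m i j * z j) ≠ 0} := by
        ext z
        simp [hΩdef, Set.mem_iInter]
      rw [h1]
      refine IsOpen.inter (isOpen_iInter_of_finite fun j => ?_)
        (isOpen_iInter_of_finite fun i => ?_)
      · exact isOpen_compl_singleton.preimage (continuous_apply j)
      · exact isOpen_compl_singleton.preimage
          (continuous_finset_sum _ fun j _ => continuous_const.mul (continuous_apply j))
    have h1Ω : (1 : Fin n → ℂ) ∈ Ω := ⟨fun j => one_ne_zero, (hWnz 1 hW1).2⟩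
    have hIDΩ : ∀ p ∈ R, ∀ z ∈ Ω,
        ∑ i, p.1 i * (∑ j, m i j * z j) ^ k = ∑ j, p.2 j * (z j) ^ k := by
      intro p hp
      set Gp : (Fin n → ℂ) → ℂ := fun z =>
        (∑ i, p.1 i * ∏ i' ∈ Finset.univ.erase i, (∑ j, m i' j * z j) ^ M) * ∏ j, (z j) ^ M
        - (∑ j, p.2 j * ∏ l ∈ Finset.univ.erase j, (z l) ^ M)
            * ∏ i, (∑ j, m i j * z j) ^ M with hGpdef
      have hPL : PolyLine Gp := by
        refine PolyLine.sub
          (PolyLine.mul (PolyLine.sum _ _ fun i _ => ?_) (PolyLine.prod _ _ fun j _ => ?_))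
          (PolyLine.mul (PolyLine.sum _ _ fun j _ => ?_) (PolyLine.prod _ _ fun i _ => ?_))
        · exact PolyLine.smul _ (PolyLine.prod _ _ fun i' _ => (PolyLine.linear (m i')).pow M)
        · exact (PolyLine.coord j).pow M
        · exact PolyLine.smul _ (PolyLine.prod _ _ fun l _ => (PolyLine.coord l).pow M)
        · exact (PolyLine.linear (m i)).pow M
      have hvan : ∀ z ∈ W, Gp z = 0 := by
        intro z hz
        have h0 := hmain p hp z hz
        rw [hkM] at h0
        have h3 := (clear_iff M (fun i => ∑ j, m i j * z j) p.1 z p.2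
          (hWnz z hz).2 (hWnz z hz).1).mp h0
        rw [hGpdef, sub_eq_zero]
        exact h3
      intro z hz
      have hG0 : Gp z = 0 := hPL.eq_zero hWopen hW1 hvan z
      rw [hGpdef] at hG0
      have h4 := (clear_iff M (fun i => ∑ j, m i j * z j) p.1 z p.2
        hz.2 hz.1).mpr (sub_eq_zero.mp hG0)
      rw [hkM]
      exact h4
    set F : Fin n → (Ω → ℂ) := fun j => fun z => ((z : Fin n → ℂ) j) ^ k with hFdef
    set G : Fin n → (Ω → ℂ) :=
      fun i => fun z => (∑ j, m i j * (z : Fin n → ℂ) j) ^ k with hGdef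
    choose bfun hbfun using hRall
    have hsub : ∀ j, F j ∈ Submodule.span ℂ (Set.range G) := by
      intro j
      rw [Submodule.mem_span_range_iff_exists_fun]
      refine ⟨fun i => bfun (Pi.single j 1) i, ?_⟩
      funext z
      have hid := hIDΩ _ (hbfun (Pi.single j 1)) (z : Fin n → ℂ) z.2
      rw [sum_single_mul j (fun l => ((z : Fin n → ℂ) l) ^ k)] at hid
      simp only [Finset.sum_apply, Pi.smul_apply, smul_eq_mul, hFdef, hGdef]
      exact hid
    have hFind : LinearIndependent ℂ F := by
      rw [Fintype.linearIndependent_iff]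
      intro g hg j0
      obtain ⟨r, hr0, hball⟩ := Metric.isOpen_iff.mp hΩopen 1 h1Ω
      set ε : ℝ := r / 2 with hεdef
      have hε0 : 0 < ε := by positivity
      have hεr : ε < r := by rw [hεdef]; linarith
      set z1 : Fin n → ℂ := fun l => if l = j0 then (1 + (ε:ℂ)) else 1 with hz1def
      have hz1Ω : z1 ∈ Ω := by
        apply hball
        rw [Metric.mem_ball, dist_pi_lt_iff hr0]
        intro b
        rcases eq_or_ne b j0 with rfl | hb
        · simp only [hz1def, if_pos rfl, Pi.one_apply]
          rw [Complex.dist_eq]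
          simpa using (by rwa [Complex.norm_real, Real.norm_of_nonneg hε0.le] : ‖(ε:ℂ)‖ < r)
        · simp [hz1def, hb, hr0]
      have e0 := congrFun hg ⟨1, h1Ω⟩
      have e1 := congrFun hg ⟨z1, hz1Ω⟩
      simp only [Finset.sum_apply, Pi.smul_apply, smul_eq_mul, Pi.zero_apply, hFdef] at e0 e1
      simp only [Pi.one_apply, _root_.one_zpow, mul_one] at e0
      have e1' : g j0 * (1 + (ε:ℂ)) ^ k + ∑ j ∈ Finset.univ.erase j0, g j = 0 := by
        rw [← e1, ← Finset.add_sum_erase _ _ (Finset.mem_univ j0)]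
        congr 1
        · simp [hz1def]
        · refine Finset.sum_congr rfl fun j hj => ?_
          have : z1 j = 1 := by simp [hz1def, (Finset.mem_erase.mp hj).1]
          rw [this, _root_.one_zpow, mul_one]
      have esum : ∑ j ∈ Finset.univ.erase j0, g j = - g j0 := by
        have := Finset.add_sum_erase Finset.univ g (Finset.mem_univ j0)
        rw [e0] at this
        linear_combination this
      rw [esum] at e1'
      have hfac : g j0 * ((1 + (ε:ℂ)) ^ k - 1) = 0 := by linear_combination e1'
      have hne1 : (1 + (ε:ℂ)) ^ k ≠ 1 := by
        have hcast : (1 + (ε:ℂ)) = (((1 + ε : ℝ)) : ℂ) := by push_cast; ring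
        rw [hcast, ← Complex.ofReal_zpow]
        intro hcon
        have : ((1 + ε : ℝ)) ^ k = 1 := by
          exact_mod_cast hcon
        rw [hkM, _root_.zpow_neg, zpow_natCast, inv_eq_one] at this
        have hgt : 1 < (1 + ε : ℝ) ^ M := one_lt_pow₀ (by linarith) hM1
        rw [this] at hgt
        exact lt_irrefl 1 hgt
      rcases mul_eq_zero.mp hfac with h | h
      · exact h
      · exact absurd (sub_eq_zero.mp h) hne1
    obtain ⟨hGind, hGmem⟩ := la hFind hsub
    have hrowex : ∀ i, (∃ j, m i j ≠ 0) ∧ ∀ p q, p ≠ q → m i p ≠ 0 → m i q = 0 := by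
      intro i
      obtain ⟨e, he⟩ := (Submodule.mem_span_range_iff_exists_fun ℂ).mp (hGmem i)
      have hpt : ∀ z, ∀ hz : z ∈ Ω, (∑ j, m i j * z j) ^ k = ∑ j, e j * (z j) ^ k := by
        intro z hz
        have h5 := congrFun he (⟨z, hz⟩ : Ω)
        simp only [Finset.sum_apply, Pi.smul_apply, smul_eq_mul, hFdef, hGdef] at h5
        exact h5.symm
      have hcleared : ∀ z : Fin n → ℂ,
          ∏ j, (z j) ^ M
            = (∑ j, e j * ∏ l ∈ Finset.univ.erase j, (z l) ^ M) * (∑ j, m i j * z j) ^ M := by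
        set Hi : (Fin n → ℂ) → ℂ := fun z =>
          ∏ j, (z j) ^ M
          - (∑ j, e j * ∏ l ∈ Finset.univ.erase j, (z l) ^ M) * (∑ j, m i j * z j) ^ M
          with hHidef
        have hPL : PolyLine Hi :=
          PolyLine.sub (PolyLine.prod _ _ fun j _ => (PolyLine.coord j).pow M)
            (PolyLine.mul (PolyLine.sum _ _ fun j _ => PolyLine.smul _
              (PolyLine.prod _ _ fun l _ => (PolyLine.coord l).pow M))
              ((PolyLine.linear (m i)).pow M))
        have hvan : ∀ z ∈ Ω, Hi z = 0 := by
          intro z hz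
          have h1 := hpt z hz
          have h2 : ∑ _ii : Fin 1, (1:ℂ) * (∑ j, m i j * z j) ^ (-(M:ℤ))
              = ∑ j, e j * (z j) ^ (-(M:ℤ)) := by
            rw [Fin.sum_univ_one, one_mul, ← hkM]
            exact h1
          have h3 := (clear_iff M (fun _ : Fin 1 => ∑ j, m i j * z j) (fun _ => 1) z e
            (fun _ => hz.2 i) hz.1).mp h2
          simp only [Fin.sum_univ_one, Fin.prod_univ_one] at h3
          have herase : (Finset.univ.erase (0 : Fin 1)) = ∅ := by decide
          rw [herase, Finset.prod_empty, mul_one, one_mul] at h3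
          rw [hHidef, sub_eq_zero]
          exact h3
        intro z
        have h0 := hPL.eq_zero hΩopen h1Ω hvan z
        rw [hHidef] at h0
        exact sub_eq_zero.mp h0
      constructor
      · by_contra hcon
        push_neg at hcon
        have h1 := hcleared 1
        have hz0 : (∑ j, m i j * (1 : Fin n → ℂ) j) = 0 := by simp [hcon]
        rw [hz0, zero_pow hM1, mul_zero] at h1
        simp at h1
      · intro p q hpq hp
        by_contra hq
        obtain ⟨zs, hzs, hzsum⟩ := zstar hpq hp hq
        have h1 := hcleared zs
        rw [hzsum, zero_pow hM1, mul_zero] at h1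
        exact (Finset.prod_ne_zero_iff.mpr fun l _ => pow_ne_zero M (hzs l)) h1
    set τ0 : Fin n → Fin n := fun i => (hrowex i).1.choose with hτ0def
    set c : Fin n → ℂ := fun i => m i (τ0 i) with hcdef
    have hc : ∀ i, c i ≠ 0 := fun i => (hrowex i).1.choose_spec
    have hm : ∀ i j, m i j = if j = τ0 i then c i else 0 := by
      intro i j
      rcases eq_or_ne j (τ0 i) with rfl | hne
      · simp [hcdef]
      · rw [if_neg hne]
        exact (hrowex i).2 (τ0 i) j (Ne.symm hne) (hc i)
    have hGF : ∀ i', G i' = ((c i') ^ k) • F (τ0 i') := by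
      intro i'
      funext z
      simp only [hGdef, hFdef, Pi.smul_apply, smul_eq_mul]
      have hrow : (∑ j, m i' j * (z : Fin n → ℂ) j) = c i' * (z : Fin n → ℂ) (τ0 i') := by
        rw [Finset.sum_eq_single (τ0 i') (fun j _ hj => by rw [hm i' j, if_neg hj, zero_mul])
          (fun h => absurd (Finset.mem_univ _) h)]
      rw [hrow, mul_zpow]
    have hinj : Function.Injective τ0 := by
      intro i1 i2 h12
      by_contra hne
      rw [Fintype.linearIndependent_iff] at hGind
      set g : Fin n → ℂ := fun i' => if i' = i1 then ((c i1) ^ k)⁻¹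
        else if i' = i2 then -(((c i2) ^ k)⁻¹) else 0 with hgdef
      have hsum : ∑ i', g i' • G i' = 0 := by
        rw [← Finset.add_sum_erase _ _ (Finset.mem_univ i1),
          ← Finset.add_sum_erase _ _ (Finset.mem_erase.mpr ⟨Ne.symm hne, Finset.mem_univ i2⟩)]
        have hg1 : g i1 = ((c i1) ^ k)⁻¹ := by simp [hgdef]
        have hg2 : g i2 = -(((c i2) ^ k)⁻¹) := by simp [hgdef, Ne.symm hne]
        have hrest : ∑ i' ∈ (Finset.univ.erase i1).erase i2, g i' • G i' = 0 := by
          refine Finset.sum_eq_zero fun i' hi' => ?_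
          have h2 := Finset.mem_erase.mp hi'
          have h3 := Finset.mem_erase.mp h2.2
          rw [hgdef]
          simp [h3.1, h2.1]
        rw [hg1, hg2, hrest, add_zero, hGF i1, hGF i2, ← h12]
        rw [smul_smul, smul_smul, inv_mul_cancel₀ (zpow_ne_zero k (hc i1)),
          neg_mul, inv_mul_cancel₀ (zpow_ne_zero k (hc i2))]
        simp
      have hz := hGind g hsum i1
      rw [hgdef] at hz
      simp only [if_pos rfl] at hz
      exact (inv_ne_zero (zpow_ne_zero k (hc i1))) hz
    have hbij : Function.Bijective τ0 := Finite.injective_iff_bijective.mp hinj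
    set τE : Equiv.Perm (Fin n) := Equiv.ofBijective τ0 hbij with hτEdef
    have hτE : ∀ i, τE i = τ0 i := fun i => rfl
    have hbc : ∀ p ∈ R, ∀ i, p.1 i * (c i) ^ k = p.2 (τ0 i) := by
      intro p hp i0
      have hfun : ∑ j, ((p.1 (τE.symm j)) * (c (τE.symm j)) ^ k) • F j
          = ∑ j, (p.2 j) • F j := by
        rw [← Equiv.sum_comp τE (fun j => ((p.1 (τE.symm j)) * (c (τE.symm j)) ^ k) • F j)]
        have hterm : ∀ i, ((p.1 (τE.symm (τE i))) * (c (τE.symm (τE i))) ^ k) • F (τE i)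
            = (p.1 i * (c i) ^ k) • F (τ0 i) := by
          intro i
          rw [Equiv.symm_apply_apply, hτE]
        simp only [hterm]
        funext z
        simp only [Finset.sum_apply, Pi.smul_apply, smul_eq_mul, hFdef]
        have hid := hIDΩ p hp (z : Fin n → ℂ) z.2
        rw [← hid]
        refine Finset.sum_congr rfl fun i _ => ?_
        have h6 := congrFun (hGF i) z
        simp only [hGdef, hFdef, Pi.smul_apply, smul_eq_mul] at h6
        rw [h6]
        ring
      have hdiff : ∀ j, (p.1 (τE.symm j)) * (c (τE.symm j)) ^ k - p.2 j = 0 := by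
        rw [Fintype.linearIndependent_iff] at hFind
        intro j
        refine hFind (fun j => (p.1 (τE.symm j)) * (c (τE.symm j)) ^ k - p.2 j) ?_ j
        simp only [sub_smul]
        rw [Finset.sum_sub_distrib, hfun, sub_self]
      have h7 := hdiff (τ0 i0)
      have hsm : τE.symm (τ0 i0) = i0 := by
        rw [← hτE, Equiv.symm_apply_apply]
      rw [hsm] at h7
      linear_combination h7
    exact ⟨τ0, c, hinj, hc, hm, hbc⟩
  · -- case 0 ≤ k, so k ≥ 2
    set K : ℕ := k.toNat with hKdef
    have hkK : k = (K : ℤ) := (Int.toNat_of_nonneg hpos).symm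
    have hK2 : 2 ≤ K := by omega
    have hK0 : K ≠ 0 := by omega
    have hglob : ∀ p ∈ R, ∀ z : Fin n → ℂ,
        ∑ i, p.1 i * (∑ j, m i j * z j) ^ K = ∑ j, p.2 j * (z j) ^ K := by
      intro p hp
      have hPL : PolyLine (fun z => ∑ i, p.1 i * (∑ j, m i j * z j) ^ K
          - ∑ j, p.2 j * (z j) ^ K) := by
        refine PolyLine.sub (PolyLine.sum _ _ fun i _ => ?_) (PolyLine.sum _ _ fun j _ => ?_)
        · exact PolyLine.smul (p.1 i) ((PolyLine.linear (m i)).pow K)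
        · exact PolyLine.smul (p.2 j) ((PolyLine.coord j).pow K)
      have hvan : ∀ z ∈ W, (∑ i, p.1 i * (∑ j, m i j * z j) ^ K
          - ∑ j, p.2 j * (z j) ^ K) = 0 := by
        intro z hz
        have h0 := hmain p hp z hz
        rw [hkK] at h0
        simp only [zpow_natCast] at h0
        rw [sub_eq_zero]
        exact h0
      intro z
      exact sub_eq_zero.mp (hPL.eq_zero hWopen hW1 hvan z)
    choose bfun hbfun using hRall
    set a : Fin n → Fin n → ℂ := fun i j => bfun (Pi.single j 1) i with hadef
    set KK : Matrix (Fin n) (Fin n) ℂ := Matrix.of (fun i p => (m i p) ^ K) with hKKdef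
    set AT : Matrix (Fin n) (Fin n) ℂ := Matrix.of (fun j i => a i j) with hATdef
    have hATKK : AT * KK = 1 := by
      ext j p
      rw [Matrix.mul_apply]
      have e1 := hglob _ (hbfun (Pi.single j 1)) (Pi.single p 1)
      simp only [sum_mul_single] at e1
      rw [sum_single_mul j (fun x => ((Pi.single p 1 : Fin n → ℂ) x) ^ K)] at e1
      rw [Matrix.one_apply]
      simp only [hKKdef, hATdef, Matrix.of_apply]
      rw [e1]
      by_cases hjp : j = p
      · subst hjp; simp
      · simp [Pi.single_apply, hjp, zero_pow hK0]
    have hKKAT : KK * AT = 1 := mul_eq_one_comm.mp hATKK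
    -- the cross identity
    have hcross : ∀ (i p q : Fin n), p ≠ q → ∀ t : ℂ,
        (m i p + t * m i q) ^ K = (m i p) ^ K + t ^ K * (m i q) ^ K := by
      intro i p q hpq t
      set z : Fin n → ℂ :=
        fun l => (Pi.single p 1 : Fin n → ℂ) l + t * (Pi.single q 1 : Fin n → ℂ) l with hzdef
      have hzl : ∀ inner : Fin n → ℂ, ∑ l, inner l * z l = inner p + t * inner q := by
        intro inner
        have hterm : ∀ l, inner l * z l
            = inner l * (Pi.single p 1 : Fin n → ℂ) l
              + t * (inner l * (Pi.single q 1 : Fin n → ℂ) l) := by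
          intro l
          simp only [hzdef]
          ring
        simp only [hterm]
        rw [Finset.sum_add_distrib, ← Finset.mul_sum, sum_mul_single, sum_mul_single]
      set w : Fin n → ℂ := fun i' => (m i' p + t * m i' q) ^ K with hwdef
      set v : Fin n → ℂ := fun j => (if j = p then 1 else 0) + t ^ K * (if j = q then 1 else 0)
        with hvdef
      have hAw : AT.mulVec w = v := by
        funext j
        simp only [Matrix.mulVec, dotProduct]
        have e1 := hglob _ (hbfun (Pi.single j 1)) z
        simp only [hzl] at e1
        rw [sum_single_mul j (fun x => (z x) ^ K)] at e1
        have e2 : z j = (if j = p then 1 else 0) + t * (if j = q then 1 else 0) := by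
          simp [hzdef, Pi.single_apply]
        rw [e2] at e1
        have e3 : ((if j = p then (1:ℂ) else 0) + t * (if j = q then 1 else 0)) ^ K = v j := by
          rcases eq_or_ne j p with rfl | hjp
          · simp [hvdef, hpq]
          · rcases eq_or_ne j q with rfl | hjq
            · simp [hvdef, hjp, mul_pow]
            · simp [hvdef, hjp, hjq, zero_pow hK0]
        rw [e3] at e1
        simpa [hATdef, Matrix.of_apply] using e1
      have hw2 : w = KK.mulVec v := by
        rw [← hAw, Matrix.mulVec_mulVec, hKKAT, Matrix.one_mulVec]
      have := congrFun hw2 i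
      simp only [Matrix.mulVec, dotProduct] at this
      simp only [hwdef] at this
      rw [this]
      simp only [hKKdef, Matrix.of_apply, hvdef, mul_add]
      rw [Finset.sum_add_distrib]
      congr 1
      · rw [Finset.sum_eq_single p (fun l _ hl => by simp [hl]) (by simp)]
        simp
      · have : ∀ l, (m i l) ^ K * (t ^ K * (if l = q then (1:ℂ) else 0))
            = t ^ K * ((m i l) ^ K * (if l = q then 1 else 0)) := fun l => by ring
        simp only [this]
        rw [← Finset.mul_sum, Finset.sum_eq_single q (fun l _ hl => by simp [hl]) (by simp)]
        simp
    -- each row of m has exactly one nonzero entry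
    have hrow1 : ∀ i, ∃ j, m i j ≠ 0 := by
      intro i
      by_contra hcon
      push_neg at hcon
      have h1 : (KK * AT) i i = 1 := by rw [hKKAT]; simp
      rw [Matrix.mul_apply] at h1
      rw [Finset.sum_eq_zero (fun j _ => by
        simp [hKKdef, hcon j, zero_pow hK0])] at h1
      exact zero_ne_one h1
    have hrow2 : ∀ i p q, p ≠ q → m i p ≠ 0 → m i q = 0 := by
      intro i p q hpq hp
      by_contra hq
      have hc := hcross i p q hpq (m i p / m i q)
      rw [div_mul_cancel₀ _ hq, div_pow, div_mul_cancel₀ _ (pow_ne_zero K hq)] at hc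
      have h2 : (2:ℂ) ^ K * (m i p) ^ K = 2 * (m i p) ^ K := by
        rw [← mul_pow, show (2:ℂ) * m i p = m i p + m i p by ring, hc]
        ring
      exact two_pow_ne_two hK2 (mul_right_cancel₀ (pow_ne_zero K hp) h2)
    set τ0 : Fin n → Fin n := fun i => (hrow1 i).choose with hτ0def
    set c : Fin n → ℂ := fun i => m i (τ0 i) with hcdef
    have hc : ∀ i, c i ≠ 0 := fun i => (hrow1 i).choose_spec
    have hm : ∀ i j, m i j = if j = τ0 i then c i else 0 := by
      intro i j
      rcases eq_or_ne j (τ0 i) with rfl | hne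
      · simp [hcdef]
      · rw [if_neg hne]
        exact hrow2 i (τ0 i) j (Ne.symm hne) (hc i)
    have hinj : Function.Injective τ0 := by
      intro i1 i2 h12
      by_contra hne
      have hoff : (KK * AT) i1 i2 = 0 := by rw [hKKAT]; simp [Matrix.one_apply, hne]
      rw [Matrix.mul_apply] at hoff
      rw [Finset.sum_eq_single (τ0 i1) (fun j _ hj => by
        simp only [hKKdef, Matrix.of_apply]
        rw [hm i1 j, if_neg hj, zero_pow hK0, zero_mul]) (by simp)] at hoff
      have ha0 : AT (τ0 i1) i2 = 0 := by
        have : (c i1) ^ K ≠ 0 := pow_ne_zero K (hc i1)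
        simp only [hKKdef, Matrix.of_apply] at hoff
        rw [hm i1 (τ0 i1), if_pos rfl] at hoff
        exact (mul_eq_zero.mp hoff).resolve_left this
      have hdiag : (KK * AT) i2 i2 = 1 := by rw [hKKAT]; simp
      rw [Matrix.mul_apply] at hdiag
      rw [Finset.sum_eq_single (τ0 i2) (fun j _ hj => by
        simp only [hKKdef, Matrix.of_apply]
        rw [hm i2 j, if_neg hj, zero_pow hK0, zero_mul]) (by simp)] at hdiag
      rw [← h12, ha0, mul_zero] at hdiag
      exact zero_ne_one hdiag
    refine ⟨τ0, c, hinj, hc, hm, ?_⟩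
    intro p hp i
    have e1 := hglob p hp (Pi.single (τ0 i) 1)
    have eL : ∑ i', p.1 i' * (∑ j, m i' j * (Pi.single (τ0 i) 1 : Fin n → ℂ) j) ^ K
        = p.1 i * (c i) ^ K := by
      rw [Finset.sum_eq_single i (fun i' _ hi' => ?_) (fun h => absurd (Finset.mem_univ i) h)]
      · rw [sum_mul_single]
      · rw [sum_mul_single, hm i' (τ0 i), if_neg (fun hcon => hi' (hinj hcon).symm),
          zero_pow hK0, mul_zero]
    have eR : ∑ j, p.2 j * ((Pi.single (τ0 i) 1 : Fin n → ℂ) j) ^ K = p.2 (τ0 i) := by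
      rw [Finset.sum_eq_single (τ0 i) (fun j _ hj => by
        simp [Pi.single_apply, hj, zero_pow hK0]) (fun h => absurd (Finset.mem_univ _) h)]
      simp
    rw [eL, eR] at e1
    rw [hkK, zpow_natCast]
    exact e1




variable {n : ℕ} {A B X : Matrix (Fin n) (Fin n) ℂ}

lemma upperTri_diagonal (v : Fin n → ℂ) : UpperTri (Matrix.diagonal v) := by
  intro i j hij
  exact Matrix.diagonal_apply_ne v (ne_of_gt hij)

lemma isDiag_upperTri (h : X.IsDiag) : UpperTri X := fun i j hij => h (ne_of_gt hij)

lemma strict_upperTri (h : StrictUpperTri X) : UpperTri X := fun i j hij => h i j (le_of_lt hij)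

lemma strict_sub_diagPart (h : UpperTri A) : StrictUpperTri (A - diagPart A) := by
  intro i j hij
  rcases lt_or_eq_of_le hij with hlt | rfl
  · rw [Matrix.sub_apply, h i j hlt, diagPart, Matrix.diagonal_apply_ne _ (ne_of_gt hlt),
      sub_zero]
  · rw [Matrix.sub_apply, diagPart, Matrix.diagonal_apply_eq, sub_self]

lemma diagPart_apply_eq (A : Matrix (Fin n) (Fin n) ℂ) (i : Fin n) : diagPart A i i = A i i :=
  Matrix.diagonal_apply_eq _ i

lemma diagonal_eq_sum (z : Fin n → ℂ) :
    Matrix.diagonal z = ∑ j, z j • Matrix.diagonal (Pi.single j 1) := by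
  ext a b
  rw [Matrix.sum_apply]
  simp only [Matrix.smul_apply, smul_eq_mul]
  rcases eq_or_ne a b with rfl | hab
  · simp only [Matrix.diagonal_apply_eq, Pi.single_apply]
    rw [Finset.sum_congr rfl (fun j _ => by rw [mul_ite, mul_one, mul_zero]),
      Finset.sum_ite_eq Finset.univ a z]
    simp
  · simp [Matrix.diagonal_apply_ne _ hab]

lemma inv_diagonal' (v : Fin n → ℂ) (hv : ∀ j, v j ≠ 0) :
    (Matrix.diagonal v)⁻¹ = Matrix.diagonal (fun j => (v j)⁻¹) := by
  refine Matrix.inv_eq_right_inv ?_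
  rw [Matrix.diagonal_mul_diagonal]
  have : (fun i => v i * (v i)⁻¹) = fun _ => (1:ℂ) := by
    funext i
    exact mul_inv_cancel₀ (hv i)
  rw [this, Matrix.diagonal_one]

lemma diagonal_zpow (d : Fin n → ℂ) (hd : ∀ j, d j ≠ 0) (k : ℤ) :
    (Matrix.diagonal d) ^ k = Matrix.diagonal (fun j => d j ^ k) := by
  cases k with
  | ofNat m =>
    rw [Int.ofNat_eq_coe, zpow_natCast, Matrix.diagonal_pow]
    congr 1
  | negSucc m =>
    rw [zpow_negSucc, Matrix.diagonal_pow,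
      inv_diagonal' (d ^ (m+1)) (fun j => by
        rw [Pi.pow_apply]; exact pow_ne_zero _ (hd j))]
    congr 1

lemma permMatrix_mul_inv (σ : Equiv.Perm (Fin n)) :
    (σ.permMatrix ℂ) * (Equiv.Perm.permMatrix ℂ σ.symm) = 1 := by
  rw [← PEquiv.toMatrix_trans, ← Equiv.toPEquiv_trans, Equiv.self_trans_symm,
    Equiv.toPEquiv_refl, PEquiv.toMatrix_refl]

lemma permMatrix_inv (σ : Equiv.Perm (Fin n)) :
    (σ.permMatrix ℂ)⁻¹ = Equiv.Perm.permMatrix ℂ σ.symm :=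
  Matrix.inv_eq_right_inv (permMatrix_mul_inv σ)

lemma perm_conj_entry (σ : Equiv.Perm (Fin n)) (X : Matrix (Fin n) (Fin n) ℂ) (a b : Fin n) :
    ((σ.permMatrix ℂ) * X * (σ.permMatrix ℂ)⁻¹) a b = X (σ a) (σ b) := by
  rw [permMatrix_inv, mul_assoc, PEquiv.mul_toMatrix_toPEquiv, PEquiv.toMatrix_toPEquiv_mul]
  simp

lemma diagPart_apply_ne (A : Matrix (Fin n) (Fin n) ℂ) {a b : Fin n} (hab : a ≠ b) :
    diagPart A a b = 0 :=
  Matrix.diagonal_apply_ne _ hab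

lemma conj_eq (τ : Equiv.Perm (Fin n)) (dd : Fin n → ℂ) (A : Matrix (Fin n) (Fin n) ℂ)
    (hA : A.IsDiag) (v : Fin n → ℂ) (hv : ∀ a, v a = dd (τ a) * A (τ a) (τ a)) :
    Matrix.diagonal v = (τ.permMatrix ℂ) * Matrix.diagonal dd * A * (τ.permMatrix ℂ)⁻¹ := by
  ext a b
  have h1 : (τ.permMatrix ℂ) * Matrix.diagonal dd * A * (τ.permMatrix ℂ)⁻¹
      = (τ.permMatrix ℂ) * (Matrix.diagonal dd * A) * (τ.permMatrix ℂ)⁻¹ := by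
    rw [Matrix.mul_assoc (τ.permMatrix ℂ)]
  rw [h1, perm_conj_entry, Matrix.diagonal_mul]
  rcases eq_or_ne a b with rfl | hab
  · rw [Matrix.diagonal_apply_eq, hv a]
  · rw [Matrix.diagonal_apply_ne _ hab, hA (fun hcon => hab (τ.injective hcon)), mul_zero]



end Stmt19

open Stmt19 in
/-- Trace of `k`-power-product preservers on the upper triangular matrices
`T_n(ℂ)`: the trace condition (with `ψ` complex linear) holds iff (i) `φ` and `ψ` map
strictly upper triangular matrices into strictly upper triangular matrices, (ii) the
diagonal parts of `φ` and `ψ` restricted to diagonal matrices have the form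
`A ↦ P C^{-k} A P⁻¹` and `A ↦ P C A P⁻¹`, and (iii) `D ∘ φ = D ∘ φ ∘ D` on `T_n(ℂ)`. -/
theorem stmt_19 (n : ℕ) (k : ℤ) (hk0 : k ≠ 0) (hk1 : k ≠ 1)
    (S : Set (Matrix (Fin n) (Fin n) ℂ))
    (hSopen : ∃ U : Set (Matrix (Fin n) (Fin n) ℂ), IsOpen U ∧
      S = U ∩ {A : Matrix (Fin n) (Fin n) ℂ | UpperTri A})
    (hS1 : 1 ∈ S) (hSinv : ∀ B ∈ S, IsUnit B)
    (φ ψ : Matrix (Fin n) (Fin n) ℂ → Matrix (Fin n) (Fin n) ℂ)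
    (hφT : ∀ A : Matrix (Fin n) (Fin n) ℂ, UpperTri A → UpperTri (φ A))
    (hψT : ∀ A : Matrix (Fin n) (Fin n) ℂ, UpperTri A → UpperTri (ψ A))
    (hψlin : IsLinearMap ℂ ψ) :
    (∀ A : Matrix (Fin n) (Fin n) ℂ, UpperTri A →
      ∀ B ∈ S, (φ A * ψ B ^ k).trace = (A * B ^ k).trace) ↔
    ((∀ A : Matrix (Fin n) (Fin n) ℂ, StrictUpperTri A → StrictUpperTri (φ A)) ∧
     (∀ A : Matrix (Fin n) (Fin n) ℂ, StrictUpperTri A → StrictUpperTri (ψ A)) ∧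
     (∃ (C P : Matrix (Fin n) (Fin n) ℂ) (σ : Equiv.Perm (Fin n)),
        C.IsDiag ∧ IsUnit C ∧ P = σ.permMatrix ℂ ∧
        ∀ A : Matrix (Fin n) (Fin n) ℂ, A.IsDiag →
          diagPart (φ A) = P * C ^ (-k) * A * P⁻¹ ∧
          diagPart (ψ A) = P * C * A * P⁻¹) ∧
     (∀ A : Matrix (Fin n) (Fin n) ℂ, UpperTri A →
        diagPart (φ A) = diagPart (φ (diagPart A)))) := by
  classical
  obtain ⟨U, hUopen, hSU⟩ := hSopen
  have hSupper : ∀ B ∈ S, UpperTri B := by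
    intro B hB
    rw [hSU] at hB
    exact hB.2
  have hU1 : (1 : Matrix (Fin n) (Fin n) ℂ) ∈ U := by
    have h := hS1
    rw [hSU] at h
    exact h.1
  constructor
  · -- FORWARD DIRECTION
    intro hcond
    set m : Matrix (Fin n) (Fin n) ℂ :=
      Matrix.of (fun i j => ψ (Matrix.diagonal (Pi.single j 1)) i i) with hmdef
    have hψdiagentry : ∀ (z : Fin n → ℂ) (i : Fin n),
        ψ (Matrix.diagonal z) i i = ∑ j, m i j * z j := by
      intro z i
      rw [diagonal_eq_sum z]
      have hζ : ψ (∑ j, z j • Matrix.diagonal (Pi.single j 1))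
          = ∑ j, z j • ψ (Matrix.diagonal (Pi.single j 1)) := by
        have h1 : ψ = ⇑(IsLinearMap.mk' ψ hψlin) := rfl
        rw [h1, map_sum]
        simp only [_root_.map_smul]
      rw [hζ, Matrix.sum_apply]
      refine Finset.sum_congr rfl fun j _ => ?_
      rw [Matrix.smul_apply, smul_eq_mul, mul_comm]
      rfl
    set W : Set (Fin n → ℂ) := {z | Matrix.diagonal z ∈ U} with hWdef
    have hWopen : IsOpen W := by
      refine hUopen.preimage ?_
      exact continuous_matrix fun i j => by
        rcases eq_or_ne i j with rfl | hij
        · simpa [Matrix.diagonal_apply_eq] using continuous_apply i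
        · simpa [Matrix.diagonal_apply_ne _ hij] using continuous_const
    have hW1 : (1 : Fin n → ℂ) ∈ W := by
      have : Matrix.diagonal (1 : Fin n → ℂ) = 1 := Matrix.diagonal_one
      simp only [hWdef, Set.mem_setOf_eq, this]
      exact hU1
    have hWS : ∀ z ∈ W, Matrix.diagonal z ∈ S := by
      intro z hz
      rw [hSU]
      exact ⟨hz, upperTri_diagonal z⟩
    have hforced : ∀ B ∈ S, k < 0 → IsUnit (ψ B) := by
      intro B hB hkneg
      rcases Nat.eq_zero_or_pos n with hn | hn
      · rw [Matrix.isUnit_iff_isUnit_det]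
        subst hn
        simp [Matrix.det_fin_zero]
      · by_contra hcon
        have h0 : ψ B ^ k = 0 := zpow_eq_zero_of_not_isUnit hcon hkneg
        obtain ⟨j0⟩ := Fin.pos_iff_nonempty.mp hn
        have hA : UpperTri (Matrix.diagonal (Pi.single j0 1)) := upperTri_diagonal _
        have h1 := hcond _ hA B hB
        rw [h0, mul_zero, Matrix.trace_zero,
          trace_mul_zpow hA (hSupper B hB) k (Or.inr (hSinv B hB))] at h1
        have h2 : ∑ l, Matrix.diagonal (Pi.single j0 1 : Fin n → ℂ) l l * (B l l) ^ k
            = (B j0 j0) ^ k := by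
          have hdd : ∀ l, Matrix.diagonal (Pi.single j0 1 : Fin n → ℂ) l l
              = (Pi.single j0 1 : Fin n → ℂ) l := fun l => Matrix.diagonal_apply_eq _ l
          simp only [hdd]
          exact sum_single_mul j0 (fun l => (B l l) ^ k)
        rw [h2] at h1
        exact zpow_ne_zero k (diag_ne_zero_of_isUnit (hSupper B hB) (hSinv B hB) j0) h1.symm
    set R : Set ((Fin n → ℂ) × (Fin n → ℂ)) :=
      {p | ∃ A, UpperTri A ∧ p = (fun i => φ A i i, fun j => A j j)} with hRdef
    have hRall : ∀ α : Fin n → ℂ, ∃ b, (b, α) ∈ R := by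
      intro α
      refine ⟨fun i => φ (Matrix.diagonal α) i i, ⟨Matrix.diagonal α, upperTri_diagonal α, ?_⟩⟩
      have : (fun j => Matrix.diagonal α j j) = α := by
        funext j
        exact Matrix.diagonal_apply_eq _ j
      rw [this]
    have hmain : ∀ p ∈ R, ∀ z ∈ W,
        ∑ i, p.1 i * (∑ j, m i j * z j) ^ k = ∑ j, p.2 j * (z j) ^ k := by
      rintro p ⟨A, hA, rfl⟩ z hz
      have hBS := hWS z hz
      have hBtri := upperTri_diagonal z
      have hunit : 0 ≤ k ∨ IsUnit (ψ (Matrix.diagonal z)) := by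
        rcases le_or_gt 0 k with h | h
        · exact Or.inl h
        · exact Or.inr (hforced _ hBS h)
      have h1 := hcond A hA _ hBS
      rw [trace_mul_zpow (hφT A hA) (hψT _ hBtri) k hunit,
        trace_mul_zpow hA hBtri k (Or.inr (hSinv _ hBS))] at h1
      have hL : ∀ i : Fin n, (∑ j, m i j * z j) = ψ (Matrix.diagonal z) i i :=
        fun i => (hψdiagentry z i).symm
      simp only [hL]
      rw [h1]
      refine Finset.sum_congr rfl fun j _ => ?_
      rw [Matrix.diagonal_apply_eq]
    have hnz : k < 0 → ∀ z ∈ W, (∀ j, z j ≠ 0) ∧ (∀ i, (∑ j, m i j * z j) ≠ 0) := by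
      intro hkneg z hz
      have hBS := hWS z hz
      constructor
      · intro j
        have h := diag_ne_zero_of_isUnit (hSupper _ hBS) (hSinv _ hBS) j
        rwa [Matrix.diagonal_apply_eq] at h
      · intro i
        rw [← hψdiagentry z i]
        exact diag_ne_zero_of_isUnit (hψT _ (upperTri_diagonal z)) (hforced _ hBS hkneg) i
    obtain ⟨τ, c, hc, hmrow, hcoef⟩ := keyLemma hk0 hk1 hWopen hW1 m R hRall hmain hnz
    have hφf : ∀ A, UpperTri A → ∀ i, φ A i i = (c i) ^ (-k) * A (τ i) (τ i) := by
      intro A hA i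
      exact hcoef _ ⟨A, hA, rfl⟩ i
    have hψdiagf : ∀ (z : Fin n → ℂ) (i : Fin n),
        ψ (Matrix.diagonal z) i i = c i * z (τ i) := by
      intro z i
      rw [hψdiagentry,
        Finset.sum_eq_single (τ i) (fun j _ hj => by rw [hmrow i j, if_neg hj, zero_mul])
        (fun h => absurd (Finset.mem_univ _) h), hmrow i (τ i), if_pos rfl]
    have hψstrict0 : ∀ N, StrictUpperTri N → ∀ i, ψ N i i = 0 := by
      intro N hN i0
      set T : Set ℂ := {t | (1 + t • N) ∈ U} with hTdef
      have hTopen : IsOpen T := by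
        refine hUopen.preimage ?_
        exact continuous_const.add (continuous_id.smul continuous_const)
      have hT0 : (0:ℂ) ∈ T := by
        have : (1 : Matrix (Fin n) (Fin n) ℂ) + (0:ℂ) • N = 1 := by simp
        simp only [hTdef, Set.mem_setOf_eq, this]
        exact hU1
      have hTn : T ∈ nhds (0:ℂ) := hTopen.mem_nhds hT0
      have hBt : ∀ t ∈ T, (1 + t • N) ∈ S := by
        intro t ht
        rw [hSU]
        refine ⟨ht, fun i j hij => ?_⟩
        rw [Matrix.add_apply, Matrix.smul_apply, upperTri_one i j hij,
          hN i j (le_of_lt hij), smul_zero, add_zero]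
      have hkey : ∀ t ∈ T, (c i0 + t * ψ N i0 i0) ^ (k.natAbs) = (c i0) ^ (k.natAbs) := by
        intro t ht
        have hBtS : (1 + t • N) ∈ S := hBt t ht
        have hBttri : UpperTri ((1: Matrix (Fin n) (Fin n) ℂ) + t • N) := hSupper _ hBtS
        have hdiagBt : ∀ j, ((1: Matrix (Fin n) (Fin n) ℂ) + t • N) j j = 1 := by
          intro j
          rw [Matrix.add_apply, Matrix.smul_apply, hN j j (le_refl j), smul_zero, add_zero,
            Matrix.one_apply_eq]
        have hψBt : ∀ i, ψ (1 + t • N) i i = c i + t * ψ N i i := by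
          intro i
          have hadd : ψ (1 + t • N) = ψ 1 + t • ψ N := by
            rw [hψlin.map_add, hψlin.map_smul]
          have hone : ψ (1 : Matrix (Fin n) (Fin n) ℂ) i i = c i := by
            rw [← Matrix.diagonal_one, hψdiagf]
            simp
          rw [hadd, Matrix.add_apply, Matrix.smul_apply, smul_eq_mul, hone]
        have hunit : 0 ≤ k ∨ IsUnit (ψ (1 + t • N)) := by
          rcases le_or_gt 0 k with h | h
          · exact Or.inl h
          · exact Or.inr (hforced _ hBtS h)
        have h1 := hcond (Matrix.diagonal (Pi.single (τ i0) 1)) (upperTri_diagonal _) _ hBtS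
        rw [trace_mul_zpow (hφT _ (upperTri_diagonal _)) (hψT _ hBttri) k hunit,
          trace_mul_zpow (upperTri_diagonal _) hBttri k (Or.inr (hSinv _ hBtS))] at h1
        have hR : ∑ j, Matrix.diagonal (Pi.single (τ i0) 1 : Fin n → ℂ) j j
            * (((1: Matrix (Fin n) (Fin n) ℂ) + t • N) j j) ^ k = 1 := by
          simp only [hdiagBt, _root_.one_zpow, mul_one, Matrix.diagonal_apply_eq]
          rw [Finset.sum_pi_single']
          simp
        have hφE : ∀ i, φ (Matrix.diagonal (Pi.single (τ i0) 1)) i i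
            = (c i) ^ (-k) * (Pi.single (τ i0) 1 : Fin n → ℂ) (τ i) := by
          intro i
          rw [hφf _ (upperTri_diagonal _) i, Matrix.diagonal_apply_eq]
        have hLs : ∑ i, φ (Matrix.diagonal (Pi.single (τ i0) 1)) i i
            * (ψ (1 + t • N) i i) ^ k
            = (c i0) ^ (-k) * (c i0 + t * ψ N i0 i0) ^ k := by
          rw [Finset.sum_eq_single i0 (fun i _ hi => by
            rw [hφE i, Pi.single_apply, if_neg (fun hcon => hi (τ.injective hcon)), mul_zero,
              zero_mul]) (fun h => absurd (Finset.mem_univ _) h)]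
          rw [hφE i0, Pi.single_eq_same, mul_one, hψBt i0]
        rw [hLs, hR] at h1
        set cc := c i0 with hccdef
        set u := ψ N i0 i0 with hudef
        have hccnz : cc ≠ 0 := hc i0
        rcases le_or_gt 0 k with hsgn | hsgn
        · have hkabs : k = (k.natAbs : ℤ) := by omega
          rw [hkabs, _root_.zpow_neg, zpow_natCast, zpow_natCast] at h1
          have hx : cc ^ (k.natAbs) ≠ 0 := pow_ne_zero _ hccnz
          calc (cc + t*u) ^ k.natAbs
              = cc ^ k.natAbs * ((cc ^ k.natAbs)⁻¹ * (cc + t*u) ^ k.natAbs) := by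
                rw [← mul_assoc, mul_inv_cancel₀ hx, one_mul]
            _ = cc ^ k.natAbs := by rw [h1, mul_one]
        · have hMk : -k = (k.natAbs : ℤ) := by omega
          rw [hMk, zpow_natCast] at h1
          have hbase : (cc + t*u) ≠ 0 := by
            intro h0
            rw [h0, _root_.zero_zpow k hk0, mul_zero] at h1
            exact zero_ne_one h1
          have hkabs : k = -(k.natAbs : ℤ) := by omega
          have hzz : (cc + t*u) ^ k = ((cc + t*u) ^ (k.natAbs : ℕ))⁻¹ := by
            conv_lhs => rw [hkabs]
            rw [_root_.zpow_neg, zpow_natCast]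
          rw [hzz] at h1
          have hy : (cc + t*u) ^ (k.natAbs) ≠ 0 := pow_ne_zero _ hbase
          have h2 := congrArg (fun x => x * (cc + t*u) ^ (k.natAbs)) h1
          simp only [mul_assoc, inv_mul_cancel₀ hy, mul_one, one_mul] at h2
          exact h2.symm
      exact onevar (hc i0) (Int.natAbs_ne_zero.mpr hk0) hTn hkey
    have hψf : ∀ A, UpperTri A → ∀ i, ψ A i i = c i * A (τ i) (τ i) := by
      intro A hA i
      have hsplit : A = diagPart A + (A - diagPart A) := (add_sub_cancel _ _).symm
      have h1 : ψ A = ψ (diagPart A) + ψ (A - diagPart A) := by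
        conv_lhs => rw [hsplit]
        exact hψlin.map_add _ _
      rw [h1, Matrix.add_apply, hψstrict0 _ (strict_sub_diagPart hA) i, add_zero]
      exact hψdiagf (fun j => A j j) i
    refine ⟨?_, ?_, ?_, ?_⟩
    · intro A hA i j hij
      rcases eq_or_lt_of_le hij with rfl | hlt
      · rw [hφf A (strict_upperTri hA) j, hA (τ j) (τ j) (le_refl _), mul_zero]
      · exact hφT A (strict_upperTri hA) i j hlt
    · intro A hA i j hij
      rcases eq_or_lt_of_le hij with rfl | hlt
      · rw [hψf A (strict_upperTri hA) j, hA (τ j) (τ j) (le_refl _), mul_zero]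
      · exact hψT A (strict_upperTri hA) i j hlt
    · refine ⟨Matrix.diagonal (fun j => c (τ.symm j)), τ.permMatrix ℂ, τ,
        Matrix.isDiag_diagonal _, ?_, rfl, ?_⟩
      · exact isUnit_of_diag (upperTri_diagonal _) (fun j => by
          rw [Matrix.diagonal_apply_eq]
          exact hc (τ.symm j))
      · intro A hAdiag
        have hAu := isDiag_upperTri hAdiag
        constructor
        · rw [diagonal_zpow (fun j => c (τ.symm j)) (fun j => hc (τ.symm j)) (-k)]
          exact conj_eq τ _ A hAdiag _ (fun a => by
            rw [hφf A hAu a, Equiv.symm_apply_apply])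
        · exact conj_eq τ _ A hAdiag _ (fun a => by
            rw [hψf A hAu a, Equiv.symm_apply_apply])
    · intro A hA
      ext a b
      rcases eq_or_ne a b with rfl | hab
      · rw [diagPart_apply_eq, diagPart_apply_eq, hφf A hA a,
          hφf (diagPart A) (upperTri_diagonal _) a,
          show diagPart A (τ a) (τ a) = A (τ a) (τ a) from diagPart_apply_eq A (τ a)]
      · rw [diagPart_apply_ne _ hab, diagPart_apply_ne _ hab]
  · -- REVERSE DIRECTION
    rintro ⟨hφS, hψS, ⟨C, P, σ, hCdiag, hCunit, hPdef, hCP⟩, hφD⟩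
    intro A hA B hB
    have hBu : UpperTri B := hSupper B hB
    have hBunit := hSinv B hB
    have hBd : ∀ j, B j j ≠ 0 := fun j => diag_ne_zero_of_isUnit hBu hBunit j
    set d : Fin n → ℂ := fun i => C i i with hddef
    have hCd : C = Matrix.diagonal d := by
      ext a b
      rcases eq_or_ne a b with rfl | hab
      · rw [Matrix.diagonal_apply_eq]
      · rw [Matrix.diagonal_apply_ne _ hab]
        exact hCdiag hab
    have hdnz : ∀ i, d i ≠ 0 :=
      fun i => diag_ne_zero_of_isUnit (isDiag_upperTri hCdiag) hCunit i
    have hentry : ∀ (D : Matrix (Fin n) (Fin n) ℂ), ∀ a,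
        (P * C * D * P⁻¹) a a = d (σ a) * D (σ a) (σ a) := by
      intro D a
      rw [hPdef, hCd]
      rw [show σ.permMatrix ℂ * Matrix.diagonal d * D * (σ.permMatrix ℂ)⁻¹
          = σ.permMatrix ℂ * (Matrix.diagonal d * D) * (σ.permMatrix ℂ)⁻¹ from by
        rw [Matrix.mul_assoc (σ.permMatrix ℂ)]]
      rw [perm_conj_entry, Matrix.diagonal_mul]
    have hentryk : ∀ (D : Matrix (Fin n) (Fin n) ℂ), ∀ a,
        (P * C ^ (-k) * D * P⁻¹) a a = (d (σ a)) ^ (-k) * D (σ a) (σ a) := by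
      intro D a
      rw [hPdef, hCd, diagonal_zpow d hdnz (-k)]
      rw [show σ.permMatrix ℂ * Matrix.diagonal (fun j => d j ^ (-k)) * D * (σ.permMatrix ℂ)⁻¹
          = σ.permMatrix ℂ * (Matrix.diagonal (fun j => d j ^ (-k)) * D) * (σ.permMatrix ℂ)⁻¹
          from by rw [Matrix.mul_assoc (σ.permMatrix ℂ)]]
      rw [perm_conj_entry, Matrix.diagonal_mul]
    have hφAe : ∀ i, φ A i i = (d (σ i)) ^ (-k) * A (σ i) (σ i) := by
      intro i
      have h1 : φ A i i = φ (diagPart A) i i := by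
        rw [← diagPart_apply_eq (φ A) i, hφD A hA, diagPart_apply_eq]
      have h2 := (hCP (diagPart A) (Matrix.isDiag_diagonal _)).1
      have h3 : φ (diagPart A) i i = (P * C ^ (-k) * diagPart A * P⁻¹) i i := by
        rw [← diagPart_apply_eq (φ (diagPart A)) i, h2]
      rw [h1, h3, hentryk, diagPart_apply_eq]
    have hψBe : ∀ i, ψ B i i = d (σ i) * B (σ i) (σ i) := by
      intro i
      have hsplit : B = diagPart B + (B - diagPart B) := (add_sub_cancel _ _).symm
      have h1 : ψ B = ψ (diagPart B) + ψ (B - diagPart B) := by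
        conv_lhs => rw [hsplit]
        exact hψlin.map_add _ _
      have h2 := hψS _ (strict_sub_diagPart hBu) i i (le_refl i)
      have h3 := (hCP (diagPart B) (Matrix.isDiag_diagonal _)).2
      have h4 : ψ (diagPart B) i i = (P * C * diagPart B * P⁻¹) i i := by
        rw [← diagPart_apply_eq (ψ (diagPart B)) i, h3]
      rw [h1, Matrix.add_apply, h2, add_zero, h4, hentry, diagPart_apply_eq]
    have hψunit : IsUnit (ψ B) := isUnit_of_diag (hψT B hBu)
      (fun i => by rw [hψBe i]; exact mul_ne_zero (hdnz _) (hBd (σ i)))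
    rw [trace_mul_zpow (hφT A hA) (hψT B hBu) k (Or.inr hψunit),
      trace_mul_zpow hA hBu k (Or.inr hBunit)]
    rw [← Equiv.sum_comp σ (fun j => A j j * (B j j) ^ k)]
    refine Finset.sum_congr rfl fun i _ => ?_
    rw [hφAe i, hψBe i, mul_zpow]
    have hdk : (d (σ i)) ^ (-k) * (d (σ i)) ^ k = 1 := by
      rw [_root_.zpow_neg]
      exact inv_mul_cancel₀ (zpow_ne_zero k (hdnz _))
    linear_combination (A (σ i) (σ i) * (B (σ i) (σ i)) ^ k) * hdk
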